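/- arXiv:2011.04072 — 2 statements merged into one kernel-verified Lean document; each statement's English description precedes it below -/
import Mathlib

section
/- For natural numbers a, b, l with l ≤ b ≤ a and 1 ≤ b, the inequality 2·H_{a+b-l} - H_a - H_b ≤ (H_a - H_l) + (H_b - H_l) holds, where H_n is the n-th harmonic number. -/
noncomputable def H (n : ℕ) : ℝ := ∑ i ∈ Finset.range n, (1 : ℝ) / (i + 1)

lemma H_add (n k : ℕ) : H (n + k) = H n + ∑ i ∈ Finset.range k, (1:ℝ)/(n+i+1) := by
  simp [H, Finset.sum_range_add, add_assoc]

theorem stmt2 (a b l : ℕ) (hlb : l ≤ b) (hba : b ≤ a) (hb : 1 ≤ b) :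
    2 * H (a + b - l) - H a - H b ≤ (H a - H l) + (H b - H l) := by
  have h1 : a + b - l = a + (b - l) := by omega
  have h2 : b = l + (b - l) := by omega
  rw [h1, H_add, show H b = H (l + (b-l)) by rw [← h2], H_add]
  have : ∑ i ∈ Finset.range (b-l), (1:ℝ)/(a+i+1) ≤ ∑ i ∈ Finset.range (b-l), (1:ℝ)/(l+i+1) := by
    apply Finset.sum_le_sum
    intro i _
    apply one_div_le_one_div_of_le
    · positivity
    · have : (l:ℝ) ≤ a := by exact_mod_cast hlb.trans hba
      linarith
  linarith
end

section
/- For any two lists A and B over a type with decidable equality, there exists a list S such that A and B are both sublists of S and |S| = |A| + |B| - lcsLen(A,B). -/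
open List

noncomputable def lcsLen {α : Type*} (A B : List α) : ℕ :=
  sSup {n : ℕ | ∃ L : List α, L.Sublist A ∧ L.Sublist B ∧ L.length = n}

noncomputable def d {α : Type*} (A B : List α) : ℝ :=
  2 * H (A.length + B.length - lcsLen A B) - H A.length - H B.length

lemma cons_sublist_decomp {α : Type*} {a : α} {L A : List α} (h : (a :: L).Sublist A) :
    ∃ A₁ A₂, A = A₁ ++ a :: A₂ ∧ L.Sublist A₂ := by
  rw [List.cons_sublist_iff] at h
  obtain ⟨r₁, r₂, rfl, hmem, hsub⟩ := h
  obtain ⟨s, t, rfl⟩ := List.append_of_mem hmem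
  exact ⟨s, t ++ r₂, by simp, hsub.trans (List.sublist_append_right t r₂)⟩

lemma merge_exists {α : Type*} :
    ∀ (L A B : List α), L.Sublist A → L.Sublist B →
      ∃ S : List α, A.Sublist S ∧ B.Sublist S ∧
        S.length + L.length = A.length + B.length
  | [], A, B, _, _ => ⟨A ++ B, List.sublist_append_left A B,
      List.sublist_append_right A B, by simp⟩
  | (x :: L), A, B, hA, hB => by
      obtain ⟨A₁, A₂, rfl, hA₂⟩ := cons_sublist_decomp hA
      obtain ⟨B₁, B₂, rfl, hB₂⟩ := cons_sublist_decomp hB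
      obtain ⟨S', hAS, hBS, hlen⟩ := merge_exists L A₂ B₂ hA₂ hB₂
      refine ⟨A₁ ++ B₁ ++ x :: S', ?_, ?_, ?_⟩
      · calc A₁ ++ x :: A₂ <+ A₁ ++ x :: S' :=
              (List.cons_sublist_cons.2 hAS).append_left A₁
          _ <+ A₁ ++ (B₁ ++ x :: S') :=
              ((List.sublist_append_right B₁ _)).append_left A₁
          _ = A₁ ++ B₁ ++ x :: S' := by simp
      · calc B₁ ++ x :: B₂ <+ B₁ ++ x :: S' :=
              (List.cons_sublist_cons.2 hBS).append_left B₁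
          _ <+ (A₁ ++ B₁) ++ x :: S' :=
              (List.sublist_append_right A₁ B₁).append (List.Sublist.refl _)
          _ = A₁ ++ B₁ ++ x :: S' := rfl
      · simp only [List.length_append, List.length_cons] at *
        omega

theorem stmt11 {α : Type*} [DecidableEq α] (A B : List α) :
    ∃ S : List α, A.Sublist S ∧ B.Sublist S ∧
      S.length = A.length + B.length - lcsLen A B := by
  have hmem : lcsLen A B ∈ {n : ℕ | ∃ L : List α, L.Sublist A ∧ L.Sublist B ∧ L.length = n} := by
    apply Nat.sSup_mem
    · exact ⟨0, [], List.nil_sublist A, List.nil_sublist B, rfl⟩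
    · exact ⟨A.length, fun n ⟨L, hLA, _, hlen⟩ => hlen ▸ hLA.length_le⟩
  obtain ⟨L, hLA, hLB, hlen⟩ := hmem
  obtain ⟨S, hAS, hBS, hS⟩ := merge_exists L A B hLA hLB
  have := hLA.length_le
  exact ⟨S, hAS, hBS, by omega⟩
end
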